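/- Let η be a p-form compatible with an F-linear operator R : X → X. Then for all vector fields x, y: i_y i_x d(η∘R²) − i_{Ry} i_x d(η∘R) − i_y i_{Rx} d(η∘R) + i_{Ry} i_{Rx} dη = −i_{N_R(x,y)} η, where N_R is the Nijenhuis torsion of R. -/
import Mathlib


/-- The Chevalley–Eilenberg differential of a `q`-form on a Lie algebra `X`
acting (via `ρ`) on an algebra of functions `F`. -/
def ceDiff {F X : Type*} [CommRing F] [LieRing X]
    (ρ : X → F → F) (q : ℕ) (μ : (Fin q → X) → F) :
    (Fin (q + 1) → X) → F :=
  fun v =>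
    (∑ i : Fin (q + 1), ((-1 : ℤ) ^ (i : ℕ)) • ρ (v i) (μ (v ∘ i.succAbove)))
    + ∑ i : Fin (q + 1), ∑ j : Fin (q + 1),
        if (i : ℕ) < (j : ℕ) then
          ((-1 : ℤ) ^ ((i : ℕ) + (j : ℕ))) • μ (fun k : Fin q =>
            if (k : ℕ) = 0 then ⁅v i, v j⁆
            else v ⟨if (k : ℕ) - 1 < (i : ℕ) then (k : ℕ) - 1
                    else if (k : ℕ) < (j : ℕ) then (k : ℕ) else (k : ℕ) + 1,
                    by have := k.isLt; split_ifs <;> omega⟩)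
        else 0

/-- Interior product of a vector with a `(q+1)`-form. -/
def intProd {F X : Type*} (q : ℕ) (x : X) (μ : (Fin (q + 1) → X) → F) :
    (Fin q → X) → F :=
  fun u => μ (Fin.cons x u)

lemma succAbove_val {n : ℕ} (i : Fin (n + 1)) (j : Fin n) :
    i.succAbove j = ⟨if (j : ℕ) < (i : ℕ) then (j : ℕ) else (j : ℕ) + 1,
      by have := j.isLt; split <;> omega⟩ := by
  unfold Fin.succAbove
  split_ifs with h1 h2 h2 <;>
    simp_all [Fin.lt_def, Fin.castSucc, Fin.castAdd, Fin.castLE, Fin.succ, Fin.ext_iff]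

lemma cons_val {X : Type*} {m : ℕ} (a : X) (u : Fin m → X) (i : Fin (m + 1)) :
    (Fin.cons a u : Fin (m + 1) → X) i =
      if h : (i : ℕ) = 0 then a else u ⟨(i : ℕ) - 1, by have := i.isLt; omega⟩ := by
  rcases i with ⟨(_ | k), hk⟩
  · rw [show (⟨0, hk⟩ : Fin (m + 1)) = 0 from rfl, Fin.cons_zero]; simp
  · rw [show (⟨k + 1, hk⟩ : Fin (m + 1)) = Fin.succ ⟨k, by omega⟩ from rfl, Fin.cons_succ]
    simp

lemma cons_cons_val {X : Type*} {m : ℕ} (a b : X) (u : Fin m → X) (i : Fin (m + 2)) :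
    (Fin.cons a (Fin.cons b u) : Fin (m + 2) → X) i =
      if h0 : (i : ℕ) = 0 then a
      else if h1 : (i : ℕ) = 1 then b
      else u ⟨(i : ℕ) - 2, by have := i.isLt; omega⟩ := by
  rcases i with ⟨(_ | (_ | k)), hk⟩
  · rw [show (⟨0, hk⟩ : Fin (m + 2)) = 0 from rfl, Fin.cons_zero]; simp
  · rw [show (⟨1, hk⟩ : Fin (m + 2)) = Fin.succ ⟨0, by omega⟩ from rfl, Fin.cons_succ]
    rw [show ((⟨0, by omega⟩ : Fin (m+1))) = 0 from rfl, Fin.cons_zero]; simp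
  · rw [show (⟨k + 2, hk⟩ : Fin (m + 2)) = Fin.succ ⟨k + 1, by omega⟩ from rfl, Fin.cons_succ]
    rw [show ((⟨k + 1, by omega⟩ : Fin (m+1))) = Fin.succ ⟨k, by omega⟩ from rfl, Fin.cons_succ]
    simp

set_option maxHeartbeats 2000000 in
/-- For a `p`-form `η` (`p = m+1 ≥ 1`) compatible with an `F`-linear `R`:
`i_y i_x d(η∘R²) − i_{Ry} i_x d(η∘R) − i_y i_{Rx} d(η∘R) + i_{Ry} i_{Rx} dη
 = −i_{N_R(x,y)} η`, where `N_R` is the Nijenhuis torsion of `R`. -/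
theorem intProd_ceDiff_nijenhuis
    {F X : Type*} [CommRing F] [Algebra ℝ F] [LieRing X] [LieAlgebra ℝ X]
    [Module F X]
    (ρ : X → F → F)
    (hρadd : ∀ (x : X) (a b : F), ρ x (a + b) = ρ x a + ρ x b)
    (hρderiv : ∀ (x : X) (a b : F), ρ x (a * b) = ρ x a * b + a * ρ x b)
    (hρlie : ∀ (x y : X) (a : F), ρ ⁅x, y⁆ a = ρ x (ρ y a) - ρ y (ρ x a))
    (hρaddX : ∀ (x y : X) (a : F), ρ (x + y) a = ρ x a + ρ y a)
    (hρsmulX : ∀ (a : F) (x : X) (b : F), ρ (a • x) b = a * ρ x b)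
    (hlie_smul : ∀ (x : X) (a : F) (y : X),
      ⁅x, a • y⁆ = a • ⁅x, y⁆ + ρ x a • y)
    (R : X →ₗ[F] X)
    (m : ℕ) (η : (Fin (m + 1) → X) → F)
    (hadd : ∀ (v : Fin (m + 1) → X) (i : Fin (m + 1)) (y z : X),
      η (Function.update v i (y + z))
        = η (Function.update v i y) + η (Function.update v i z))
    (hsmul : ∀ (v : Fin (m + 1) → X) (i : Fin (m + 1)) (a : F) (y : X),
      η (Function.update v i (a • y)) = a * η (Function.update v i y))
    (halt : ∀ (v : Fin (m + 1) → X) (i j : Fin (m + 1)),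
      i ≠ j → v i = v j → η v = 0)
    (hcompat : ∀ (v : Fin (m + 1) → X) (h0 : 0 < m + 1) (h1 : 1 < m + 1),
      η (Function.update v ⟨0, h0⟩ (R (v ⟨0, h0⟩)))
        = η (Function.update v ⟨1, h1⟩ (R (v ⟨1, h1⟩)))) :
    ∀ (x y : X) (u : Fin m → X),
      intProd m y (intProd (m + 1) x
          (ceDiff ρ (m + 1)
            (fun w => η (Function.update w 0 (R (R (w 0))))))) u
      - intProd m (R y) (intProd (m + 1) x
          (ceDiff ρ (m + 1)
            (fun w => η (Function.update w 0 (R (w 0)))))) u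
      - intProd m y (intProd (m + 1) (R x)
          (ceDiff ρ (m + 1)
            (fun w => η (Function.update w 0 (R (w 0)))))) u
      + intProd m (R y) (intProd (m + 1) (R x) (ceDiff ρ (m + 1) η)) u
      = -intProd m
          (⁅R x, R y⁆ - R ⁅R x, y⁆ - R ⁅x, R y⁆ + R (R ⁅x, y⁆)) η u := by
  intro x y u
  -- η vanishes on slot-0 zero, is additive, negates
  have hzero : ∀ a : X, η (Fin.cons (0 : X) u) = 0 := by
    intro a
    have h := hadd (Fin.cons (0 : X) u) 0 0 0
    simp only [Fin.update_cons_zero] at h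
    simp only [add_zero] at h
    linear_combination -h
  have hconsadd : ∀ a b : X, η (Fin.cons (a + b) u) = η (Fin.cons a u) + η (Fin.cons b u) := by
    intro a b
    have h := hadd (Fin.cons a u) 0 a b
    simpa only [Fin.update_cons_zero] using h
  have hconssub : ∀ a b : X, η (Fin.cons (a - b) u) = η (Fin.cons a u) - η (Fin.cons b u) := by
    intro a b
    have h := hconsadd (a - b) b
    simp only [sub_add_cancel] at h
    linear_combination -h
  -- moving R from slot 0 to slot 1
  have hmove : ∀ (h1 : 1 < m + 1) (W V : Fin (m + 1) → X),
      W 0 = R (V 0) → V ⟨1, h1⟩ = R (W ⟨1, h1⟩) →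
      (∀ k : Fin (m + 1), 2 ≤ (k : ℕ) → W k = V k) →
      η W = η V := by
    intro h1 W V h0 h1' hk
    have H := hcompat (Function.update W 0 (V 0)) (by omega) h1
    have key0 : Function.update W 0 (V 0) ⟨0, by omega⟩ = V 0 := by
      rw [show (⟨0, by omega⟩ : Fin (m + 1)) = 0 from rfl, Function.update_self]
    have key1 : Function.update W 0 (V 0) ⟨1, h1⟩ = W ⟨1, h1⟩ := by
      apply Function.update_of_ne
      simp [Fin.ext_iff]
    rw [key0, key1] at H
    have e1 : Function.update (Function.update W 0 (V 0)) ⟨0, by omega⟩ (R (V 0)) = W := by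
      rw [show (⟨0, by omega⟩ : Fin (m + 1)) = 0 from rfl, Function.update_idem, ← h0,
        Function.update_eq_self]
    have e2 : Function.update (Function.update W 0 (V 0)) ⟨1, h1⟩ (R (W ⟨1, h1⟩)) = V := by
      funext k
      by_cases hk1 : k = (⟨1, h1⟩ : Fin (m + 1))
      · subst hk1
        rw [Function.update_self, ← h1']
      · rw [Function.update_of_ne hk1]
        by_cases hk0 : k = 0
        · subst hk0
          rw [Function.update_self]
        · rw [Function.update_of_ne hk0]
          apply hk
          simp only [Fin.ext_iff, Fin.val_zero, Fin.val_mk] at hk0 hk1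
          omega
    rw [e1, e2] at H
    exact H
  set f2 : (Fin (m + 1) → X) → F := fun w => η (Function.update w 0 (R (R (w 0)))) with hf2
  set f1 : (Fin (m + 1) → X) → F := fun w => η (Function.update w 0 (R (w 0))) with hf1
  simp only [intProd, ceDiff]
  set va : Fin (m + 2) → X := Fin.cons x (Fin.cons y u) with hva
  set vb : Fin (m + 2) → X := Fin.cons x (Fin.cons (R y) u) with hvb
  set vc : Fin (m + 2) → X := Fin.cons (R x) (Fin.cons y u) with hvc
  set vd : Fin (m + 2) → X := Fin.cons (R x) (Fin.cons (R y) u) with hvd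
  have cancel : ∀ (e : ℤ) (A B C D : F), A = C → B = D → e • A - e • B - e • C + e • D = 0 := by
    rintro e A B C D rfl rfl; ring
  have cancel' : ∀ (e : ℤ) (A B C D : F), A = B → C = D → e • A - e • B - e • C + e • D = 0 := by
    rintro e A B C D rfl rfl; ring
  have h1 : (∑ i : Fin (m + 1 + 1), (-1 : ℤ) ^ (i : ℕ) • ρ (va i) (f2 (va ∘ i.succAbove)))
      - (∑ i : Fin (m + 1 + 1), (-1 : ℤ) ^ (i : ℕ) • ρ (vb i) (f1 (vb ∘ i.succAbove)))
      - (∑ i : Fin (m + 1 + 1), (-1 : ℤ) ^ (i : ℕ) • ρ (vc i) (f1 (vc ∘ i.succAbove)))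
      + (∑ i : Fin (m + 1 + 1), (-1 : ℤ) ^ (i : ℕ) • ρ (vd i) (η (vd ∘ i.succAbove))) = 0 := by
    rw [← Finset.sum_sub_distrib, ← Finset.sum_sub_distrib, ← Finset.sum_add_distrib]
    apply Finset.sum_eq_zero
    rintro ⟨iv, hi⟩ -
    rcases iv with _ | n
    · refine cancel' _ _ _ _ _ ?_ ?_
      · congr 1 <;> first
          | rfl
          | · simp only [hf1, hf2]
              congr 1
              funext ⟨kv, hk⟩
              simp only [Function.update_apply, Function.comp_apply, succAbove_val, hva, hvb,
                cons_cons_val, Fin.ext_iff, Fin.val_mk, Fin.val_zero]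
              split_ifs <;> first | rfl | omega | (congr 1 <;> omega) | simp_all
      · congr 1 <;> first
          | rfl
          | · simp only [hf1]
              congr 1
              funext ⟨kv, hk⟩
              simp only [Function.update_apply, Function.comp_apply, succAbove_val, hvc, hvd,
                cons_cons_val, Fin.ext_iff, Fin.val_mk, Fin.val_zero]
              split_ifs <;> first | rfl | omega | (congr 1 <;> omega) | simp_all
    · refine cancel _ _ _ _ _ ?_ ?_
      · congr 1 <;> first
          | rfl
          | · simp only [hf1, hf2]
              congr 1
              funext ⟨kv, hk⟩
              simp only [Function.update_apply, Function.comp_apply, succAbove_val, hva, hvc,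
                cons_cons_val, Fin.ext_iff, Fin.val_mk, Fin.val_zero]
              split_ifs <;> first | rfl | omega | (congr 1 <;> omega) | simp_all
      · congr 1 <;> first
          | rfl
          | · simp only [hf1]
              congr 1
              funext ⟨kv, hk⟩
              simp only [Function.update_apply, Function.comp_apply, succAbove_val, hvb, hvd,
                cons_cons_val, Fin.ext_iff, Fin.val_mk, Fin.val_zero]
              split_ifs <;> first | rfl | omega | (congr 1 <;> omega) | simp_all
  have hN : η (Fin.cons (⁅R x, R y⁆ - R ⁅R x, y⁆ - R ⁅x, R y⁆ + R (R ⁅x, y⁆)) u)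
      = η (Fin.cons ⁅R x, R y⁆ u) - η (Fin.cons (R ⁅R x, y⁆) u)
        - η (Fin.cons (R ⁅x, R y⁆) u) + η (Fin.cons (R (R ⁅x, y⁆)) u) := by
    rw [hconsadd, hconssub, hconssub]
  have h2 : (∑ i : Fin (m + 1 + 1), ∑ j : Fin (m + 1 + 1),
        if (i : ℕ) < (j : ℕ) then
          ((-1 : ℤ) ^ ((i : ℕ) + (j : ℕ))) • f2 (fun k : Fin (m + 1) =>
            if (k : ℕ) = 0 then ⁅va i, va j⁆
            else va ⟨if (k : ℕ) - 1 < (i : ℕ) then (k : ℕ) - 1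
                    else if (k : ℕ) < (j : ℕ) then (k : ℕ) else (k : ℕ) + 1,
                    by have := k.isLt; split_ifs <;> omega⟩)
        else 0)
      - (∑ i : Fin (m + 1 + 1), ∑ j : Fin (m + 1 + 1),
        if (i : ℕ) < (j : ℕ) then
          ((-1 : ℤ) ^ ((i : ℕ) + (j : ℕ))) • f1 (fun k : Fin (m + 1) =>
            if (k : ℕ) = 0 then ⁅vb i, vb j⁆
            else vb ⟨if (k : ℕ) - 1 < (i : ℕ) then (k : ℕ) - 1
                    else if (k : ℕ) < (j : ℕ) then (k : ℕ) else (k : ℕ) + 1,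
                    by have := k.isLt; split_ifs <;> omega⟩)
        else 0)
      - (∑ i : Fin (m + 1 + 1), ∑ j : Fin (m + 1 + 1),
        if (i : ℕ) < (j : ℕ) then
          ((-1 : ℤ) ^ ((i : ℕ) + (j : ℕ))) • f1 (fun k : Fin (m + 1) =>
            if (k : ℕ) = 0 then ⁅vc i, vc j⁆
            else vc ⟨if (k : ℕ) - 1 < (i : ℕ) then (k : ℕ) - 1
                    else if (k : ℕ) < (j : ℕ) then (k : ℕ) else (k : ℕ) + 1,
                    by have := k.isLt; split_ifs <;> omega⟩)
        else 0)
      + (∑ i : Fin (m + 1 + 1), ∑ j : Fin (m + 1 + 1),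
        if (i : ℕ) < (j : ℕ) then
          ((-1 : ℤ) ^ ((i : ℕ) + (j : ℕ))) • η (fun k : Fin (m + 1) =>
            if (k : ℕ) = 0 then ⁅vd i, vd j⁆
            else vd ⟨if (k : ℕ) - 1 < (i : ℕ) then (k : ℕ) - 1
                    else if (k : ℕ) < (j : ℕ) then (k : ℕ) else (k : ℕ) + 1,
                    by have := k.isLt; split_ifs <;> omega⟩)
        else 0)
      = -η (Fin.cons (⁅R x, R y⁆ - R ⁅R x, y⁆ - R ⁅x, R y⁆ + R (R ⁅x, y⁆)) u) := by
    simp only [← Finset.sum_sub_distrib, ← Finset.sum_add_distrib]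
    refine Eq.trans (Finset.sum_eq_single (0 : Fin (m + 1 + 1)) (fun b _ hb => ?_) (by simp)) ?_
    · -- outer index b ≠ 0 : the whole inner sum vanishes
      apply Finset.sum_eq_zero
      rintro ⟨jv, hj⟩ -
      rcases b with ⟨(_ | iv), hi⟩
      · exact absurd (by simp [Fin.ext_iff]) hb
      · by_cases hij : iv + 1 < jv
        · simp only [Fin.val_mk, if_pos hij]
          refine cancel _ _ _ _ _ ?_ ?_
          · simp only [hf2, hf1]
            refine hmove (by omega) _ _ ?_ ?_ ?_
            · simp only [Function.update_apply, Fin.ext_iff, Fin.val_mk, Fin.val_zero, Fin.val_one, if_true, if_false, eq_self_iff_true, Nat.zero_sub, hva, hvb, hvc, hvd, cons_cons_val]; split_ifs <;> first | rfl | omega | simp_all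
            · simp only [Function.update_apply, Fin.ext_iff, Fin.val_mk, Fin.val_zero, Fin.val_one, if_true, if_false, eq_self_iff_true, Nat.zero_sub, hva, hvb, hvc, hvd, cons_cons_val]; split_ifs <;> first | rfl | omega | simp_all
            · rintro ⟨kv, hk⟩ hk2
              simp only [Fin.val_mk] at hk2
              simp only [Function.update_apply, Fin.ext_iff, Fin.val_mk, Fin.val_zero, Fin.val_one, if_true, if_false, eq_self_iff_true, Nat.zero_sub, hva, hvb, hvc, hvd, cons_cons_val]; split_ifs <;> first | rfl | omega | simp_all
          · simp only [hf1]
            refine hmove (by omega) _ _ ?_ ?_ ?_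
            · simp only [Function.update_apply, Fin.ext_iff, Fin.val_mk, Fin.val_zero, Fin.val_one, if_true, if_false, eq_self_iff_true, Nat.zero_sub, hva, hvb, hvc, hvd, cons_cons_val]; split_ifs <;> first | rfl | omega | simp_all
            · simp only [Function.update_apply, Fin.ext_iff, Fin.val_mk, Fin.val_zero, Fin.val_one, if_true, if_false, eq_self_iff_true, Nat.zero_sub, hva, hvb, hvc, hvd, cons_cons_val]; split_ifs <;> first | rfl | omega | simp_all
            · rintro ⟨kv, hk⟩ hk2
              simp only [Fin.val_mk] at hk2
              simp only [Function.update_apply, Fin.ext_iff, Fin.val_mk, Fin.val_zero, Fin.val_one, if_true, if_false, eq_self_iff_true, Nat.zero_sub, hva, hvb, hvc, hvd, cons_cons_val]; split_ifs <;> first | rfl | omega | simp_all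
        · simp only [Fin.val_mk, if_neg hij]
          ring
    · refine Eq.trans (Finset.sum_eq_single (1 : Fin (m + 1 + 1)) (fun b _ hb => ?_) (by simp)) ?_
      · rcases b with ⟨(_ | (_ | jv)), hj⟩
        · simp
        · exact absurd (by simp [Fin.ext_iff]) hb
        · simp only [Fin.val_mk, Fin.val_zero, if_pos (show 0 < jv + 2 by omega)]
          refine cancel' _ _ _ _ _ ?_ ?_
          · simp only [hf2, hf1]
            refine hmove (by omega) _ _ ?_ ?_ ?_
            · simp only [Function.update_apply, Fin.ext_iff, Fin.val_mk, Fin.val_zero, Fin.val_one, if_true, if_false, eq_self_iff_true, Nat.zero_sub, hva, hvb, hvc, hvd, cons_cons_val]; split_ifs <;> first | rfl | omega | simp_all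
            · simp only [Function.update_apply, Fin.ext_iff, Fin.val_mk, Fin.val_zero, Fin.val_one, if_true, if_false, eq_self_iff_true, Nat.zero_sub, hva, hvb, hvc, hvd, cons_cons_val]; split_ifs <;> first | rfl | omega | simp_all
            · rintro ⟨kv, hk⟩ hk2
              simp only [Fin.val_mk] at hk2
              simp only [Function.update_apply, Fin.ext_iff, Fin.val_mk, Fin.val_zero, Fin.val_one, if_true, if_false, eq_self_iff_true, Nat.zero_sub, hva, hvb, hvc, hvd, cons_cons_val]; split_ifs <;> first | rfl | omega | simp_all
          · simp only [hf1]
            refine hmove (by omega) _ _ ?_ ?_ ?_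
            · simp only [Function.update_apply, Fin.ext_iff, Fin.val_mk, Fin.val_zero, Fin.val_one, if_true, if_false, eq_self_iff_true, Nat.zero_sub, hva, hvb, hvc, hvd, cons_cons_val]; split_ifs <;> first | rfl | omega | simp_all
            · simp only [Function.update_apply, Fin.ext_iff, Fin.val_mk, Fin.val_zero, Fin.val_one, if_true, if_false, eq_self_iff_true, Nat.zero_sub, hva, hvb, hvc, hvd, cons_cons_val]; split_ifs <;> first | rfl | omega | simp_all
            · rintro ⟨kv, hk⟩ hk2
              simp only [Fin.val_mk] at hk2
              simp only [Function.update_apply, Fin.ext_iff, Fin.val_mk, Fin.val_zero, Fin.val_one, if_true, if_false, eq_self_iff_true, Nat.zero_sub, hva, hvb, hvc, hvd, cons_cons_val]; split_ifs <;> first | rfl | omega | simp_all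
      · -- the surviving (0,1) term
        norm_num
        have final : ∀ A B C D : F,
            A = η (Fin.cons (R (R ⁅x, y⁆)) u) →
            B = η (Fin.cons (R ⁅x, R y⁆) u) →
            C = η (Fin.cons (R ⁅R x, y⁆) u) →
            D = η (Fin.cons ⁅R x, R y⁆ u) →
            -A + B + C + -D
              = -η (Fin.cons (⁅R x, R y⁆ - R ⁅R x, y⁆ - R ⁅x, R y⁆ + R (R ⁅x, y⁆)) u) := by
          rintro A B C D rfl rfl rfl rfl
          rw [hN]; ring
        refine final _ _ _ _ ?_ ?_ ?_ ?_
        · simp only [hf2]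
          congr 1
          funext ⟨kv, hk⟩
          simp only [Function.update_apply, Fin.ext_iff, Fin.val_mk, Fin.val_zero, Fin.val_one, if_true, if_false, eq_self_iff_true, Nat.zero_sub, hva, hvb, hvc, hvd, cons_cons_val, cons_val]; split_ifs <;> first | rfl | omega | simp_all | (congr 1 <;> omega)
        · simp only [hf1]
          congr 1
          funext ⟨kv, hk⟩
          simp only [Function.update_apply, Fin.ext_iff, Fin.val_mk, Fin.val_zero, Fin.val_one, if_true, if_false, eq_self_iff_true, Nat.zero_sub, hva, hvb, hvc, hvd, cons_cons_val, cons_val]; split_ifs <;> first | rfl | omega | simp_all | (congr 1 <;> omega)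
        · simp only [hf1]
          congr 1
          funext ⟨kv, hk⟩
          simp only [Function.update_apply, Fin.ext_iff, Fin.val_mk, Fin.val_zero, Fin.val_one, if_true, if_false, eq_self_iff_true, Nat.zero_sub, hva, hvb, hvc, hvd, cons_cons_val, cons_val]; split_ifs <;> first | rfl | omega | simp_all | (congr 1 <;> omega)
        · congr 1
          funext ⟨kv, hk⟩
          simp only [Function.update_apply, Fin.ext_iff, Fin.val_mk, Fin.val_zero, Fin.val_one, if_true, if_false, eq_self_iff_true, Nat.zero_sub, hva, hvb, hvc, hvd, cons_cons_val, cons_val]; split_ifs <;> first | rfl | omega | simp_all | (congr 1 <;> omega)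
  linear_combination h1 + h2
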